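/- Let 0 < b < 1, z > 0, and n₀, k ∈ ℝ, and define p(x) = (1/2π)·√((b−x)/x)·( n₀/(√(1−b)·(1−x)) − k√z/(√(z+b)·(z+x)) ) for x ∈ (0,b). Then ∫₀^b p(x) dx = 1 if and only if n₀/√(1−b) + k·√(z/(z+b)) = 2 + n₀ + k. -/

import Mathlib

open Real Filter Topology MeasureTheory intervalIntegral Set

private lemma tendsto_sqrt_atTop' : Tendsto Real.sqrt atTop atTop := by
  simpa only [← Real.sqrt_eq_rpow] using tendsto_rpow_atTop (by norm_num : (0:ℝ) < 1/2)

private lemma key_integrable (b c M : ℝ) (hb : 0 < b)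
    (hM : ∀ x ∈ Set.Ioc (0:ℝ) b, 1 / |c - x| ≤ M) :
    IntervalIntegrable (fun x => Real.sqrt ((b - x) / x) / (c - x)) volume 0 b := by
  have hM0 : 0 ≤ M := le_trans (by positivity) (hM b ⟨hb, le_refl b⟩)
  have h1 : IntervalIntegrable (fun x : ℝ => Real.sqrt b * M * x ^ (-(1/2) : ℝ)) volume 0 b :=
    (intervalIntegrable_rpow' (by norm_num)).const_mul _
  refine h1.mono_fun ?_ ?_
  · apply Measurable.aestronglyMeasurable
    fun_prop
  · rw [Filter.EventuallyLE, ae_restrict_iff' measurableSet_uIoc]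
    refine Eventually.of_forall fun x hx => ?_
    rw [Set.uIoc_of_le hb.le] at hx
    obtain ⟨hx0, hxb⟩ := hx
    have hxr : x ^ (-(1/2) : ℝ) = (Real.sqrt x)⁻¹ := by
      rw [Real.rpow_neg hx0.le, Real.sqrt_eq_rpow]
    have hsx : 0 < Real.sqrt x := Real.sqrt_pos.mpr hx0
    rw [Real.norm_eq_abs, Real.norm_eq_abs, abs_div, abs_of_nonneg (Real.sqrt_nonneg _),
      abs_of_nonneg (by positivity : (0:ℝ) ≤ Real.sqrt b * M * x ^ (-(1/2) : ℝ)), hxr]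
    have h2 : Real.sqrt ((b - x) / x) ≤ Real.sqrt b / Real.sqrt x := by
      rw [← Real.sqrt_div hb.le]
      apply Real.sqrt_le_sqrt
      gcongr
      linarith
    calc Real.sqrt ((b - x) / x) / |c - x|
        = Real.sqrt ((b - x) / x) * (1 / |c - x|) := by rw [mul_one_div]
      _ ≤ (Real.sqrt b / Real.sqrt x) * M :=
          mul_le_mul h2 (hM x ⟨hx0, hxb⟩) (by positivity) (by positivity)
      _ = Real.sqrt b * M * (Real.sqrt x)⁻¹ := by field_simp

private lemma alg_deriv (b c x u s t : ℝ) (hx : x ≠ 0) (hu : u ≠ 0) (hcx : c - x ≠ 0)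
    (hcb : c - b ≠ 0) (hu2 : u ^ 2 = (b - x) / x) (ht2 : t ^ 2 = c / (c - b))
    (hst : s * t = 1) :
    -2 * (1 / (1 + u ^ 2) * (-b / x ^ 2 / (2 * u)))
      + 2 * s * (1 / (1 + (t * u) ^ 2) * (t * (-b / x ^ 2 / (2 * u)))) = u / (c - x) := by
  have h1 : 1 + u ^ 2 = b / x := by rw [hu2]; field_simp; ring
  have h2 : 1 + (t * u) ^ 2 = b * (c - x) / ((c - b) * x) := by
    rw [mul_pow, ht2, hu2]; field_simp; ring
  have hb0 : b ≠ 0 := by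
    intro h
    rw [h, zero_div] at h1
    nlinarith [sq_nonneg u]
  have hu2' : u ^ 2 * x = b - x := by rw [hu2]; field_simp
  rw [h1, h2]
  field_simp
  linear_combination (-(c-b)) * hst - hu2'

private lemma key_integral (b c : ℝ) (hb : 0 < b) (hc : c < 0 ∨ b < c) :
    ∫ x in (0:ℝ)..b, Real.sqrt ((b - x) / x) / (c - x)
      = Real.pi * (1 - Real.sqrt ((c - b) / c)) := by
  have hcb : c - b ≠ 0 := by rcases hc with h | h <;> intro hh <;> nlinarith
  have hc0 : c ≠ 0 := by rcases hc with h | h <;> intro hh <;> nlinarith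
  have hcbpos : 0 < (c - b) / c := by
    rcases hc with h | h
    · exact div_pos_of_neg_of_neg (by linarith) h
    · exact div_pos (by linarith) (by linarith)
  have hccb : 0 < c / (c - b) := by
    rcases hc with h | h
    · exact div_pos_of_neg_of_neg h (by linarith)
    · exact div_pos (by linarith) (by linarith)
  set s := Real.sqrt ((c - b) / c) with hs_def
  set t := Real.sqrt (c / (c - b)) with ht_def
  have ht_pos : 0 < t := Real.sqrt_pos.mpr hccb
  have hst : s * t = 1 := by
    rw [hs_def, ht_def, ← Real.sqrt_mul hcbpos.le]
    rw [show (c - b) / c * (c / (c - b)) = 1 by field_simp]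
    exact Real.sqrt_one
  have ht2 : t ^ 2 = c / (c - b) := Real.sq_sqrt hccb.le
  set F : ℝ → ℝ := fun x => -2 * Real.arctan (Real.sqrt ((b - x) / x))
      + 2 * s * Real.arctan (t * Real.sqrt ((b - x) / x)) with hF_def
  have hint : IntervalIntegrable (fun x => Real.sqrt ((b - x) / x) / (c - x)) volume 0 b := by
    rcases hc with h | h
    · refine key_integrable b c (1 / (-c)) hb fun x hx => ?_
      rw [abs_of_neg (by linarith [hx.1] : c - x < 0)]
      rw [show -(c - x) = x - c by ring]
      exact one_div_le_one_div_of_le (by linarith) (by linarith [hx.1])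
    · refine key_integrable b c (1 / (c - b)) hb fun x hx => ?_
      rw [abs_of_pos (by linarith [hx.2] : (0:ℝ) < c - x)]
      exact one_div_le_one_div_of_le (by linarith) (by linarith [hx.2])
  have hderiv : ∀ x ∈ Set.Ioo (0:ℝ) b,
      HasDerivAt F (Real.sqrt ((b - x) / x) / (c - x)) x := by
    intro x hx
    obtain ⟨hx0, hxb⟩ := hx
    have hfrac_pos : 0 < (b - x) / x := div_pos (by linarith) hx0
    have hcx : c - x ≠ 0 := by rcases hc with h | h <;> intro hh <;> nlinarith
    have hu_pos : 0 < Real.sqrt ((b - x) / x) := Real.sqrt_pos.mpr hfrac_pos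
    have hu2 : Real.sqrt ((b - x) / x) ^ 2 = (b - x) / x := Real.sq_sqrt hfrac_pos.le
    have hinner : HasDerivAt (fun y : ℝ => (b - y) / y) (-b / x ^ 2) x := by
      have h := (((hasDerivAt_id x).const_sub b).div (hasDerivAt_id x) hx0.ne')
      exact h.congr_deriv (by simp only [id]; field_simp; ring)
    have hu' : HasDerivAt (fun y : ℝ => Real.sqrt ((b - y) / y))
        (-b / x ^ 2 / (2 * Real.sqrt ((b - x) / x))) x := hinner.sqrt hfrac_pos.ne'
    have h1 : HasDerivAt (fun y : ℝ => Real.arctan (Real.sqrt ((b - y) / y)))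
        (1 / (1 + Real.sqrt ((b - x) / x) ^ 2) * (-b / x ^ 2 / (2 * Real.sqrt ((b - x) / x)))) x :=
      (Real.hasDerivAt_arctan _).comp x hu'
    have h2 : HasDerivAt (fun y : ℝ => Real.arctan (t * Real.sqrt ((b - y) / y)))
        (1 / (1 + (t * Real.sqrt ((b - x) / x)) ^ 2) *
          (t * (-b / x ^ 2 / (2 * Real.sqrt ((b - x) / x))))) x :=
      (Real.hasDerivAt_arctan _).comp x (hu'.const_mul t)
    have hF' := (h1.const_mul (-2)).add (h2.const_mul (2 * s))
    have halg := alg_deriv b c x (Real.sqrt ((b - x) / x)) s t hx0.ne' hu_pos.ne' hcx hcb hu2 ht2 hst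
    rw [hF_def]
    exact hF'.congr_deriv halg
  have hu_top : Tendsto (fun x : ℝ => Real.sqrt ((b - x) / x)) (𝓝[>] 0) atTop := by
    apply tendsto_sqrt_atTop'.comp
    have h1 : Tendsto (fun x : ℝ => (b - x) * x⁻¹) (𝓝[>] 0) atTop := by
      apply Filter.Tendsto.pos_mul_atTop hb
      · have : Tendsto (fun x : ℝ => b - x) (𝓝 0) (𝓝 (b - 0)) :=
          (continuous_const.sub continuous_id).tendsto 0
        simpa using this.mono_left nhdsWithin_le_nhds
      · exact tendsto_inv_nhdsGT_zero
    exact h1.congr fun x => (div_eq_mul_inv _ _).symm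
  have harc1 : Tendsto (fun x : ℝ => Real.arctan (Real.sqrt ((b - x) / x))) (𝓝[>] 0)
      (𝓝 (Real.pi / 2)) :=
    (tendsto_nhds_of_tendsto_nhdsWithin Real.tendsto_arctan_atTop).comp hu_top
  have harc2 : Tendsto (fun x : ℝ => Real.arctan (t * Real.sqrt ((b - x) / x))) (𝓝[>] 0)
      (𝓝 (Real.pi / 2)) :=
    (tendsto_nhds_of_tendsto_nhdsWithin Real.tendsto_arctan_atTop).comp
      (hu_top.const_mul_atTop ht_pos)
  have hlim0 : Tendsto F (𝓝[>] (0:ℝ)) (𝓝 (Real.pi * s - Real.pi)) := by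
    have h := (harc1.const_mul (-2)).add (harc2.const_mul (2 * s))
    rw [hF_def]
    convert h using 2
    ring
  have hlimb : Tendsto F (𝓝[<] b) (𝓝 0) := by
    have hcont1 : ContinuousAt (fun x : ℝ => Real.sqrt ((b - x) / x)) b :=
      Real.continuous_sqrt.continuousAt.comp
        (((continuous_const.sub continuous_id).continuousAt).div continuousAt_id hb.ne')
    have hcont : ContinuousAt F b := by
      rw [hF_def]
      exact ((Real.continuous_arctan.continuousAt.comp hcont1).const_mul (-2)).add
        (((Real.continuous_arctan.continuousAt.comp (hcont1.const_mul t))).const_mul (2 * s))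
    have h0 : F b = 0 := by simp [hF_def]
    have := hcont.continuousWithinAt (s := Set.Iio b)
    rw [ContinuousWithinAt, h0] at this
    exact this
  have hmain := integral_eq_sub_of_hasDerivAt_of_tendsto hb hderiv hint hlim0 hlimb
  rw [hmain]
  ring

/-- normalization of the constrained spectral density in the
solution region `S₀ᵦ` (eqs. (45)–(46) of the paper): for `0 < b < 1`, `z > 0`,
`p(x) = (1/2π)√((b−x)/x)(n₀/(√(1−b)(1−x)) − k√z/(√(z+b)(z+x)))` satisfies
`∫₀ᵇ p = 1` iff `n₀/√(1−b) + k√(z/(z+b)) = 2 + n₀ + k`. -/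
theorem S0b_normalization_condition (b z n₀ k : ℝ) (hb0 : 0 < b) (hb1 : b < 1)
    (hz : 0 < z) :
    ((∫ x in (0:ℝ)..b,
        (1 / (2 * Real.pi)) * Real.sqrt ((b - x) / x) *
          (n₀ / (Real.sqrt (1 - b) * (1 - x)) -
            k * Real.sqrt z / (Real.sqrt (z + b) * (z + x)))) = 1) ↔
      n₀ / Real.sqrt (1 - b) + k * Real.sqrt (z / (z + b)) = 2 + n₀ + k := by
  have h1b : (0:ℝ) < 1 - b := by linarith
  have hzb : (0:ℝ) < z + b := by linarith
  have e1 : 0 < Real.sqrt (1 - b) := Real.sqrt_pos.mpr h1b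
  have e2 : 0 < Real.sqrt (z + b) := Real.sqrt_pos.mpr hzb
  have e3 : 0 < Real.sqrt z := Real.sqrt_pos.mpr hz
  have hpi : (0:ℝ) < Real.pi := Real.pi_pos
  have hint1 : IntervalIntegrable (fun x => Real.sqrt ((b - x) / x) / (1 - x)) volume 0 b :=
    key_integrable b 1 (1 / (1 - b)) hb0 (fun x hx => by
      rw [abs_of_pos (by linarith [hx.2] : (0:ℝ) < 1 - x)]
      exact one_div_le_one_div_of_le h1b (by linarith [hx.2]))
  have hint2 : IntervalIntegrable (fun x => Real.sqrt ((b - x) / x) / (-z - x)) volume 0 b :=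
    key_integrable b (-z) (1 / z) hb0 (fun x hx => by
      rw [abs_of_neg (by linarith [hx.1] : -z - x < 0)]
      exact one_div_le_one_div_of_le hz (by linarith [hx.1]))
  have hcongr : Set.EqOn
      (fun x => (1 / (2 * Real.pi)) * Real.sqrt ((b - x) / x) *
          (n₀ / (Real.sqrt (1 - b) * (1 - x)) -
            k * Real.sqrt z / (Real.sqrt (z + b) * (z + x))))
      (fun x => (n₀ / (2 * Real.pi * Real.sqrt (1 - b))) * (Real.sqrt ((b - x) / x) / (1 - x))
        + (k * Real.sqrt z / (2 * Real.pi * Real.sqrt (z + b))) *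
            (Real.sqrt ((b - x) / x) / (-z - x)))
      (Set.uIcc (0:ℝ) b) := by
    intro x hx
    rw [Set.uIcc_of_le hb0.le] at hx
    have hx1 : (1:ℝ) - x ≠ 0 := by have := hx.2; intro hh; nlinarith
    have hzx : z + x ≠ 0 := by have := hx.1; intro hh; nlinarith
    have hzx' : -z - x ≠ 0 := by intro hh; apply hzx; linarith
    field_simp
    ring
  rw [intervalIntegral.integral_congr hcongr,
    intervalIntegral.integral_add (hint1.const_mul _) (hint2.const_mul _),
    intervalIntegral.integral_const_mul, intervalIntegral.integral_const_mul,
    key_integral b 1 hb0 (Or.inr hb1), key_integral b (-z) hb0 (Or.inl (by linarith))]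
  have hq1 : Real.sqrt ((1 - b) / 1) = Real.sqrt (1 - b) := by rw [div_one]
  have hq2 : Real.sqrt ((-z - b) / -z) = Real.sqrt (z + b) / Real.sqrt z := by
    rw [show (-z - b) / -z = (z + b) / z by rw [show -z - b = -(z + b) by ring, neg_div_neg_eq],
      Real.sqrt_div hzb.le]
  have hq3 : Real.sqrt (z / (z + b)) = Real.sqrt z / Real.sqrt (z + b) :=
    Real.sqrt_div hz.le _
  rw [hq1, hq2, hq3]
  have key : n₀ / (2 * Real.pi * Real.sqrt (1 - b)) * (Real.pi * (1 - Real.sqrt (1 - b)))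
      + k * Real.sqrt z / (2 * Real.pi * Real.sqrt (z + b)) *
          (Real.pi * (1 - Real.sqrt (z + b) / Real.sqrt z))
      = (n₀ / Real.sqrt (1 - b) + k * (Real.sqrt z / Real.sqrt (z + b)) - n₀ - k) / 2 := by
    field_simp
    ring
  rw [key]
  constructor <;> intro h <;> [linarith; linarith]
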